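/- Let 𝒢 be a second countable locally compact Hausdorff étale groupoid and F: 𝒢 → ℂ a continuous positive definite function with F ∈ B_{0,l}(𝒢). Then the GNS representation π_F associated to F is a B_{0,l}(𝒢)-representation: for all f,g in the fundamental sequence (given by a sup-norm dense sequence in C_c(𝒢)), the matrix coefficient x ↦ ⟨π_F(x)σ(f)(s(x)), σ(g)(r(x))⟩ equals (conj(g) * F * conj(f)*)(x) and lies in B_{0,l}(𝒢). -/

import Mathlib

open scoped BigOperators ComplexConjugate ENNReal NNReal
open MeasureTheory Filter Topology

noncomputable section

instance : Fact ((1 : ℝ≥0∞) ≤ 2) := ⟨one_le_two⟩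

/-- The ambient separable Hilbert space `ℓ²(ℕ, ℂ)`, in which the fibres of any
Borel Hilbert bundle with a fundamental sequence may be realized. -/
abbrev Hamb : Type := lp (fun _ : ℕ => ℂ) 2

instance : MeasurableSpace Hamb := borel _
instance : BorelSpace Hamb := ⟨rfl⟩

/-- A bounded complex-valued function. -/
def BddFun {X : Type} (f : X → ℂ) : Prop := ∃ M : ℝ, ∀ x, ‖f x‖ ≤ M

/-- A (second countable locally compact Hausdorff) étale groupoid: a groupoid structure
on `G` (with total operations, the product being meaningful on composable pairs
`s x = r y`), such that inversion and multiplication are continuous and the range map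
is a local homeomorphism.  The standing topological assumptions (Hausdorff, second
countable, locally compact) are imposed as typeclass assumptions in the theorems. -/
structure EtaleGroupoid (G : Type) [TopologicalSpace G] where
  mul : G → G → G
  inv : G → G
  r : G → G
  s : G → G
  r_def : ∀ x, r x = mul x (inv x)
  s_def : ∀ x, s x = mul (inv x) x
  inv_inv : ∀ x, inv (inv x) = x
  s_inv : ∀ x, s (inv x) = r x
  mul_assoc' : ∀ x y z, s x = r y → s y = r z → mul (mul x y) z = mul x (mul y z)
  r_mul : ∀ x y, s x = r y → r (mul x y) = r x
  s_mul : ∀ x y, s x = r y → s (mul x y) = s y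
  inv_mul_cancel' : ∀ x y, s x = r y → mul (inv x) (mul x y) = y
  mul_inv_cancel' : ∀ x y, s x = r y → mul (mul x y) (inv y) = x
  continuous_inv : Continuous inv
  continuous_r : Continuous r
  continuous_s : Continuous s
  continuous_mul : ∀ x y : G, s x = r y → ∀ W : Set G, IsOpen W → mul x y ∈ W →
    ∃ U V : Set G, IsOpen U ∧ IsOpen V ∧ x ∈ U ∧ y ∈ V ∧
      ∀ x' ∈ U, ∀ y' ∈ V, s x' = r y' → mul x' y' ∈ W
  etale : ∀ x : G, ∃ U : Set G, IsOpen U ∧ x ∈ U ∧ Set.InjOn r U ∧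
    ∀ V : Set G, V ⊆ U → IsOpen V → IsOpen (r '' V)

namespace EtaleGroupoid

variable {G : Type} [TopologicalSpace G] [MeasurableSpace G]

/-- The unit space `𝒢⁽⁰⁾`. -/
def units (g : EtaleGroupoid G) : Set G := Set.range g.r

/-- The range fibre `𝒢^u = r⁻¹(u)`. -/
def rFiber (g : EtaleGroupoid G) (u : G) : Set G := {x | g.r x = u}

/-- The source fibre `𝒢_u = s⁻¹(u)`. -/
def sFiber (g : EtaleGroupoid G) (u : G) : Set G := {x | g.s x = u}

/-- Membership in `C_c(𝒢)`: continuous with compact support. -/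
def IsCc (_g : EtaleGroupoid G) (f : G → ℂ) : Prop := Continuous f ∧ HasCompactSupport f

/-- Convolution: `(f * h)(x) = Σ_{y ∈ 𝒢^{r(x)}} f(y) h(y⁻¹ x)`. -/
def conv (g : EtaleGroupoid G) (f h : G → ℂ) : G → ℂ :=
  fun x => ∑' y : g.rFiber (g.r x), f (y : G) * h (g.mul (g.inv (y : G)) x)

/-- The involution `f^*(x) = conj (f (x⁻¹))`. -/
def star' (g : EtaleGroupoid G) (f : G → ℂ) : G → ℂ := fun x => conj (f (g.inv x))

/-- Iterated convolution powers: `convIter g h n = h^{*(n+1)}`. -/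
def convIter (g : EtaleGroupoid G) (h : G → ℂ) : ℕ → G → ℂ
  | 0 => h
  | n + 1 => g.conv (convIter g h n) h

/-- `B(𝒢)`: bounded Borel functions. -/
def BG (_g : EtaleGroupoid G) : Set (G → ℂ) := {f | Measurable f ∧ BddFun f}

/-- `B_c(𝒢)`: compactly supported bounded Borel functions. -/
def Bc (_g : EtaleGroupoid G) : Set (G → ℂ) :=
  {f | Measurable f ∧ BddFun f ∧ HasCompactSupport f}

/-- `B_{0,l}(𝒢)`: bounded Borel functions which are locally `B₀`, i.e. whose
restriction to `𝒢(K)` vanishes at infinity for every compact `K ⊆ 𝒢⁽⁰⁾`. -/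
def B0l (g : EtaleGroupoid G) : Set (G → ℂ) :=
  {f | Measurable f ∧ BddFun f ∧
    ∀ K : Set G, K ⊆ g.units → IsCompact K → ∀ ε : ℝ, 0 < ε →
      ∃ C : Set G, IsCompact C ∧ ∀ x : G, g.r x ∈ K → g.s x ∈ K → x ∉ C → ‖f x‖ < ε}

/-- An algebraic ideal `D ⊴ B(𝒢)`. -/
structure IsBorelIdeal (g : EtaleGroupoid G) (D : Set (G → ℂ)) : Prop where
  subset_BG : D ⊆ g.BG
  add_mem : ∀ f ∈ D, ∀ h ∈ D, f + h ∈ D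
  smul_mem : ∀ f ∈ D, ∀ c : ℂ, c • f ∈ D
  mul_mem : ∀ f ∈ D, ∀ h ∈ g.BG, h * f ∈ D

/-- A positive definite function on the groupoid. -/
def IsPosDef (g : EtaleGroupoid G) (F : G → ℂ) : Prop :=
  ∀ u ∈ g.units, ∀ n : ℕ, ∀ x : Fin n → G, (∀ i, x i ∈ g.rFiber u) → ∀ c : Fin n → ℂ,
    0 ≤ (∑ i, ∑ j, conj (c i) * c j * F (g.mul (g.inv (x i)) (x j))).re ∧
    (∑ i, ∑ j, conj (c i) * c j * F (g.mul (g.inv (x i)) (x j))).im = 0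

/-- A function is locally `C₀` (in norm) : restriction to `𝒢(K)` vanishes at
infinity for every compact `K ⊆ 𝒢⁽⁰⁾`. -/
def IsLocallyC0 (g : EtaleGroupoid G) (F : G → ℂ) : Prop :=
  ∀ K : Set G, K ⊆ g.units → IsCompact K → ∀ ε : ℝ, 0 < ε →
    ∃ C : Set G, IsCompact C ∧ ∀ x : G, g.r x ∈ K → g.s x ∈ K → x ∉ C → ‖F x‖ < ε

/-- The Haagerup property for an étale groupoid. -/
def HaagerupProperty (g : EtaleGroupoid G) : Prop :=
  ∃ F : ℕ → G → ℂ, (∀ n, Continuous (F n)) ∧ (∀ n, g.IsPosDef (F n)) ∧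
    (∀ n, ∀ u ∈ g.units, F n u = 1) ∧
    (∀ K : Set G, IsCompact K → ∀ ε : ℝ, 0 < ε →
      ∃ N : ℕ, ∀ n : ℕ, N ≤ n → ∀ x ∈ K, ‖F n x - 1‖ < ε) ∧
    (∀ n, Continuous (F n) ∧ g.IsLocallyC0 (F n))

/-- The lower integral of `F` against the induced measure `ν`:
`∫ F dν = ∫_{𝒢⁽⁰⁾} Σ_{x ∈ 𝒢^u} F(x) dμ(u)`. -/
def fiberL (g : EtaleGroupoid G) (μ : Measure G) (F : G → ℝ≥0∞) : ℝ≥0∞ :=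
  ∫⁻ u, ∑' x : g.rFiber u, F (x : G) ∂μ

/-- The lower integral of `F` against `ν⁻¹` (source fibres). -/
def fiberLs (g : EtaleGroupoid G) (μ : Measure G) (F : G → ℝ≥0∞) : ℝ≥0∞ :=
  ∫⁻ u, ∑' x : g.sFiber u, F (x : G) ∂μ

/-- The induced measure `ν` of a set. -/
def nu (g : EtaleGroupoid G) (μ : Measure G) (E : Set G) : ℝ≥0∞ :=
  g.fiberL μ (E.indicator 1)

/-- `μ` is a quasi-invariant probability measure on the unit space: the induced
measure `ν` and its image `ν⁻¹` under inversion are mutually absolutely continuous. -/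
def IsQuasiInvariant (g : EtaleGroupoid G) (μ : Measure G) : Prop :=
  IsProbabilityMeasure μ ∧ μ g.unitsᶜ = 0 ∧
    ∀ E : Set G, MeasurableSet E → (g.nu μ E = 0 ↔ g.nu μ (g.inv ⁻¹' E) = 0)

/-- `μ` is an invariant probability measure on the unit space: `ν = ν⁻¹`. -/
def IsInvariant (g : EtaleGroupoid G) (μ : Measure G) : Prop :=
  IsProbabilityMeasure μ ∧ μ g.unitsᶜ = 0 ∧
    ∀ E : Set G, MeasurableSet E → g.nu μ E = g.nu μ (g.inv ⁻¹' E)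

/-- A modular function (Radon–Nikodym derivative `Δ = dν/dν⁻¹`), chosen to be a
Borel homomorphism. -/
structure IsModular (g : EtaleGroupoid G) (μ : Measure G) (Δ : G → ℝ) : Prop where
  meas : Measurable Δ
  pos : ∀ x, 0 < Δ x
  hom : ∀ x y, g.s x = g.r y → Δ (g.mul x y) = Δ x * Δ y
  inv_eq : ∀ x, Δ (g.inv x) = (Δ x)⁻¹
  rn : ∀ F : G → ℝ≥0∞, Measurable F →
    g.fiberL μ F = g.fiberLs μ fun x => F x * ENNReal.ofReal (Δ x)

end EtaleGroupoid

/-- A unitary representation of the groupoid on a Borel Hilbert bundle.  The fibres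
are realized as (closed) subspaces of an ambient Hilbert space `E`; `op x` is a
unitary `H(s x) → H(r x)`, the assignment is a Borel homomorphism (Borel-ness being
expressed through the matrix coefficients of a fundamental sequence of Borel
sections of the bundle). -/
structure GRep {G : Type} [TopologicalSpace G] [MeasurableSpace G] (g : EtaleGroupoid G)
    (E : Type) [NormedAddCommGroup E] [InnerProductSpace ℂ E] [MeasurableSpace E] where
  fib : G → Submodule ℂ E
  op : G → E → E
  mapsTo : ∀ x : G, ∀ v ∈ fib (g.s x), op x v ∈ fib (g.r x)
  map_add : ∀ x : G, ∀ v ∈ fib (g.s x), ∀ w ∈ fib (g.s x), op x (v + w) = op x v + op x w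
  map_smul : ∀ x : G, ∀ c : ℂ, ∀ v ∈ fib (g.s x), op x (c • v) = c • op x v
  inner_op : ∀ x : G, ∀ v ∈ fib (g.s x), ∀ w ∈ fib (g.s x),
    (inner ℂ (op x v) (op x w) : ℂ) = (inner ℂ v w : ℂ)
  surj' : ∀ x : G, ∀ w ∈ fib (g.r x), ∃ v ∈ fib (g.s x), op x v = w
  mul_op : ∀ x y : G, g.s x = g.r y → ∀ v ∈ fib (g.s y), op (g.mul x y) v = op x (op y v)
  unit_op : ∀ u ∈ g.units, ∀ v ∈ fib u, op u v = v
  fundSeq : ℕ → G → E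
  fundSeq_mem : ∀ n : ℕ, ∀ u ∈ g.units, fundSeq n u ∈ fib u
  fundSeq_meas : ∀ n : ℕ, Measurable (fundSeq n)
  fundSeq_dense : ∀ u ∈ g.units, ∀ v ∈ fib u, ∀ ε : ℝ, 0 < ε →
    ∃ w ∈ Submodule.span ℂ (Set.range fun n => fundSeq n u), ‖v - w‖ < ε
  fund_coeff_meas : ∀ n m : ℕ,
    Measurable fun x : G => (inner ℂ (fundSeq m (g.r x)) (op x (fundSeq n (g.s x))) : ℂ)

namespace GRep

variable {G : Type} [TopologicalSpace G] [MeasurableSpace G] {g : EtaleGroupoid G}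
variable {E : Type} [NormedAddCommGroup E] [InnerProductSpace ℂ E] [MeasurableSpace E]

/-- The matrix coefficient `x ↦ ⟨π(x) ξ(s x), η(r x)⟩` (linear in `ξ`). -/
def coeff (π : GRep g E) (ξ η : G → E) : G → ℂ :=
  fun x => (inner ℂ (η (g.r x)) (π.op x (ξ (g.s x))) : ℂ)

/-- A fundamental sequence of Borel sections of the bundle of `π`. -/
structure IsFundSeq (π : GRep g E) (f : ℕ → G → E) : Prop where
  mem : ∀ n : ℕ, ∀ u ∈ g.units, f n u ∈ π.fib u
  meas : ∀ n : ℕ, Measurable (f n)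
  dense : ∀ u ∈ g.units, ∀ v ∈ π.fib u, ∀ ε : ℝ, 0 < ε →
    ∃ w ∈ Submodule.span ℂ (Set.range fun n => f n u), ‖v - w‖ < ε
  coeff_meas : ∀ n m : ℕ, Measurable (π.coeff (f n) (f m))

/-- `π` is a `D`-representation: some fundamental sequence has all its matrix
coefficients in `D`. -/
def IsDRep (π : GRep g E) (D : Set (G → ℂ)) : Prop :=
  ∃ f : ℕ → G → E, π.IsFundSeq f ∧ ∀ n m : ℕ, π.coeff (f n) (f m) ∈ D

/-- A square-integrable Borel section of the bundle of `π`, i.e. a vector of the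
direct integral `∫^⊕ H_π(u) dμ(u)`. -/
structure IsL2Section (π : GRep g E) (μ : MeasureTheory.Measure G) (ξ : G → E) : Prop where
  mem : ∀ u ∈ g.units, ξ u ∈ π.fib u
  meas : Measurable ξ
  sq : MeasureTheory.Integrable (fun u => ‖ξ u‖ ^ 2) μ

/-- `⟨π_μ(f) ξ, η⟩ = ∫_𝒢 f(x) ⟨π(x)ξ(s x), η(r x)⟩ Δ(x)^{-1/2} dν(x)`, the
sesquilinear pairing of the integrated form of `π` w.r.t. `μ` (with modular
function `Δ`). -/
def pairing (π : GRep g E) (μ : MeasureTheory.Measure G) (Δ : G → ℝ) (f : G → ℂ)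
    (ξ η : G → E) : ℂ :=
  ∫ u, (∑' x : g.rFiber u,
    f (x : G) * ((Δ (x : G) ^ (-(1 / 2) : ℝ) : ℝ) : ℂ) * π.coeff ξ η (x : G)) ∂μ

/-- The operator norm `‖π_μ(f)‖` of the integrated form, expressed as the supremum
of the pairings over the unit ball of (the dense subspace of square-integrable
Borel sections of) the direct integral. -/
def intNorm (π : GRep g E) (μ : MeasureTheory.Measure G) (Δ : G → ℝ) (f : G → ℂ) : ℝ :=
  sSup {t : ℝ | ∃ ξ η : G → E, π.IsL2Section μ ξ ∧ π.IsL2Section μ η ∧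
    (∫ u, ‖ξ u‖ ^ 2 ∂μ) ≤ 1 ∧ (∫ u, ‖η u‖ ^ 2 ∂μ) ≤ 1 ∧
    t = ‖π.pairing μ Δ f ξ η‖}

end GRep

namespace EtaleGroupoid

variable {G : Type} [TopologicalSpace G] [MeasurableSpace G]

/-- The set of quasi-invariant probability measures on the unit space. -/
def QIMeasures (g : EtaleGroupoid G) : Set (MeasureTheory.Measure G) :=
  {μ | g.IsQuasiInvariant μ}

/-- The seminorm `‖f‖_{D,ℳ} = sup {‖π_μ(f)‖ : π a D-representation, μ ∈ ℳ}`. -/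
def DNorm (g : EtaleGroupoid G) (D : Set (G → ℂ)) (M : Set (MeasureTheory.Measure G))
    (f : G → ℂ) : ℝ :=
  sSup {t : ℝ | ∃ π : GRep g Hamb, π.IsDRep D ∧ ∃ μ ∈ M, ∃ Δ : G → ℝ,
    g.IsModular μ Δ ∧ t = π.intNorm μ Δ f}

/-- The full norm `‖f‖_max = sup {‖π_μ(f)‖ : π any representation, μ quasi-invariant}`. -/
def maxNorm (g : EtaleGroupoid G) (f : G → ℂ) : ℝ :=
  sSup {t : ℝ | ∃ π : GRep g Hamb, ∃ μ ∈ g.QIMeasures, ∃ Δ : G → ℝ,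
    g.IsModular μ Δ ∧ t = π.intNorm μ Δ f}

/-- `‖Ind(δ_u)(f)‖`: the norm of left convolution by `f` on `ℓ²(𝒢_u)`, expressed as a
supremum of pairings against finitely supported vectors in the unit ball. -/
def IndDeltaNorm (g : EtaleGroupoid G) (u : G) (f : G → ℂ) : ℝ :=
  sSup {t : ℝ | ∃ ξ η : G → ℂ,
    (Function.support ξ).Finite ∧ Function.support ξ ⊆ g.sFiber u ∧
    (Function.support η).Finite ∧ Function.support η ⊆ g.sFiber u ∧
    (∑' x : g.sFiber u, ‖ξ (x : G)‖ ^ 2) ≤ 1 ∧ (∑' x : g.sFiber u, ‖η (x : G)‖ ^ 2) ≤ 1 ∧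
    t = ‖∑' x : g.sFiber u, g.conv f ξ (x : G) * conj (η (x : G))‖}

/-- The reduced norm `‖f‖_r = sup_{u ∈ 𝒢⁽⁰⁾} ‖Ind(δ_u)(f)‖`. -/
def redNorm (g : EtaleGroupoid G) (f : G → ℂ) : ℝ :=
  sSup {t : ℝ | ∃ u ∈ g.units, t = g.IndDeltaNorm u f}

/-- `‖Ind(μ)(f)‖`: the norm of left convolution by `f` on `L²(𝒢, ν⁻¹)`, expressed as a
supremum of pairings against bounded compactly supported Borel functions in the unit
ball of `L²(𝒢, ν⁻¹)`. -/
def IndMuNorm (g : EtaleGroupoid G) (μ : MeasureTheory.Measure G) (f : G → ℂ) : ℝ :=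
  sSup {t : ℝ | ∃ ξ η : G → ℂ, Measurable ξ ∧ Measurable η ∧ BddFun ξ ∧ BddFun η ∧
    HasCompactSupport ξ ∧ HasCompactSupport η ∧
    (∫ u, (∑' x : g.sFiber u, ‖ξ (x : G)‖ ^ 2) ∂μ) ≤ 1 ∧
    (∫ u, (∑' x : g.sFiber u, ‖η (x : G)‖ ^ 2) ∂μ) ≤ 1 ∧
    t = ‖∫ u, (∑' x : g.sFiber u, g.conv f ξ (x : G) * conj (η (x : G))) ∂μ‖}

/-- The norm of `L²(𝒢, ν⁻¹)`. -/
def L2s (g : EtaleGroupoid G) (μ : MeasureTheory.Measure G) (h : G → ℂ) : ℝ :=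
  Real.sqrt (∫ u, (∑' x : g.sFiber u, ‖h (x : G)‖ ^ 2) ∂μ)

/-- Products of `n` elements of `S` (units for `n = 0`). -/
def Spow (g : EtaleGroupoid G) (S : Set G) : ℕ → Set G
  | 0 => g.units
  | n + 1 => {z | ∃ x ∈ S, ∃ y ∈ Spow g S n, g.s x = g.r y ∧ z = g.mul x y}

/-- The ball `∪_{k ≤ n} S^k`. -/
def ball (g : EtaleGroupoid G) (S : Set G) (n : ℕ) : Set G :=
  ⋃ k ∈ Finset.range (n + 1), g.Spow S k

/-- The length function `l_S(x) = min {n ≥ 0 : x ∈ ∪_{k ≤ n} S^k}`. -/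
def lS (g : EtaleGroupoid G) (S : Set G) (x : G) : ℕ := sInf {n : ℕ | x ∈ g.ball S n}

/-- The fibre Cayley-graph metric `d(x, y) = l_S (x⁻¹ y)` (as a real number). -/
def dS (g : EtaleGroupoid G) (S : Set G) (x y : G) : ℝ := (g.lS S (g.mul (g.inv x) y) : ℝ)

/-- `S` is a compact open symmetric generating set making all fibre Cayley graphs
`δ`-hyperbolic; i.e. `𝒢` is a hyperbolic groupoid (witnessed by `S` and `δ`). -/
structure IsHyperbolicGen (g : EtaleGroupoid G) (S : Set G) (δ : ℝ) : Prop where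
  compact : IsCompact S
  isOpen : IsOpen S
  symm : ∀ x ∈ S, g.inv x ∈ S
  gen : ∀ x : G, ∃ n : ℕ, 1 ≤ n ∧ x ∈ g.Spow S n
  delta_pos : 0 < δ
  hyp : ∀ u ∈ g.units, ∀ a ∈ g.rFiber u, ∀ b ∈ g.rFiber u, ∀ c ∈ g.rFiber u,
    ∀ d ∈ g.rFiber u,
      g.dS S a b + g.dS S c d ≤ max (g.dS S a c + g.dS S b d) (g.dS S a d + g.dS S b c) + δ

/-- The ideal `ℒ^p_μ(𝒢)` of bounded Borel functions which are `p`-integrable for the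
induced measure `ν`. -/
def LpIdeal (g : EtaleGroupoid G) (μ : MeasureTheory.Measure G) (p : ℝ) : Set (G → ℂ) :=
  {f | Measurable f ∧ BddFun f ∧
    g.fiberL μ (fun x => ENNReal.ofReal (‖f x‖ ^ p)) ≠ ⊤}

/-- The `ℒ^p_μ`-seminorm `|f|_p`. -/
def lpSeminorm (g : EtaleGroupoid G) (μ : MeasureTheory.Measure G) (p : ℝ) (f : G → ℂ) : ℝ :=
  ((g.fiberL μ fun x => ENNReal.ofReal (‖f x‖ ^ p)).toReal) ^ (1 / p)

/-- `‖f‖_{ℒ^p_μ(𝒢), μ}`: the supremum of `‖π_μ(f)‖` over all `ℒ^p_μ(𝒢)`-representations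
(for an invariant `μ`, so `Δ ≡ 1`). -/
def LpDNorm (g : EtaleGroupoid G) (μ : MeasureTheory.Measure G) (p : ℝ) (f : G → ℂ) : ℝ :=
  sSup {t : ℝ | ∃ π : GRep g Hamb, π.IsDRep (g.LpIdeal μ p) ∧
    t = π.intNorm μ (fun _ => 1) f}

end EtaleGroupoid

namespace EtaleGroupoid

section Aux

variable {G : Type} [TopologicalSpace G] (g : EtaleGroupoid G)

lemma r_inv' (x : G) : g.r (g.inv x) = g.s x := by
  have h := g.s_inv (g.inv x); rw [g.inv_inv] at h; exact h.symm

lemma mul_s' (x : G) : g.mul x (g.s x) = x := by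
  have h := g.inv_mul_cancel' (g.inv x) x (by rw [g.s_inv])
  rw [g.inv_inv] at h
  rw [g.s_def]; exact h

lemma comp_left {x w : G} (h : g.r w = g.r x) : g.mul x (g.mul (g.inv x) w) = w := by
  have h2 := g.inv_mul_cancel' (g.inv x) w (by rw [g.s_inv, h])
  rwa [g.inv_inv] at h2

lemma r_mul_inv_left {x w : G} (h : g.r w = g.r x) :
    g.r (g.mul (g.inv x) w) = g.s x := by
  rw [g.r_mul _ _ (by rw [g.s_inv, h]), g.r_inv']

lemma s_mul_inv_left {x w : G} (h : g.r w = g.r x) :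
    g.s (g.mul (g.inv x) w) = g.s w :=
  g.s_mul _ _ (by rw [g.s_inv, h])

lemma inv_mul_rev {a b : G} (h : g.s a = g.r b) :
    g.inv (g.mul a b) = g.mul (g.inv b) (g.inv a) := by
  have hc1 : g.s (g.inv b) = g.r (g.inv a) := by rw [g.s_inv, g.r_inv', h]
  have hr : g.r (g.mul (g.inv b) (g.inv a)) = g.s b := by
    rw [g.r_mul _ _ hc1, g.r_inv']
  have key : g.mul (g.mul a b) (g.mul (g.inv b) (g.inv a)) = g.r (g.mul a b) := by
    rw [g.mul_assoc' a b _ h (by rw [hr])]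
    rw [g.comp_left (x := b) (w := g.inv a) (by rw [g.r_inv', h])]
    rw [g.r_mul a b h, g.r_def]
  have hs : g.s (g.mul a b) = g.r (g.mul (g.inv b) (g.inv a)) := by
    rw [g.s_mul a b h, hr]
  have h2 := g.inv_mul_cancel' (g.mul a b) (g.mul (g.inv b) (g.inv a)) hs
  rw [key] at h2
  rw [← h2]
  conv_lhs => rw [← g.mul_s' (g.inv (g.mul a b))]
  rw [g.s_inv]

variable [T2Space G]

lemma rFiber_isClosed (v : G) : IsClosed (g.rFiber v) := by
  have h : g.rFiber v = g.r ⁻¹' {v} := rfl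
  rw [h]; exact IsClosed.preimage g.continuous_r isClosed_singleton

lemma compact_inter_fiber_finite {K : Set G} (hK : IsCompact K) (v : G) :
    (K ∩ g.rFiber v).Finite := by
  classical
  have hS : IsCompact (K ∩ g.rFiber v) := hK.inter_right (g.rFiber_isClosed v)
  choose U hUopen hmemU hinj _ using g.etale
  obtain ⟨t, hts, hcov⟩ := hS.elim_nhds_subcover U (fun x _ => (hUopen x).mem_nhds (hmemU x))
  refine Set.Finite.subset t.finite_toSet ?_
  intro w hw
  obtain ⟨x, hxt, hwU⟩ := Set.mem_iUnion₂.mp (hcov hw)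
  have hx : x ∈ K ∩ g.rFiber v := hts x hxt
  have : w = x := hinj x hwU (hmemU x) (by rw [hw.2, hx.2])
  rw [this]; exact hxt

lemma fiber_card_bound {K : Set G} (hK : IsCompact K) :
    ∃ N : ℕ, ∀ (v : G) (S : Finset G), (∀ w ∈ S, w ∈ K ∧ g.r w = v) → S.card ≤ N := by
  classical
  choose U hUopen hmemU hinj _ using g.etale
  obtain ⟨t, _, hcov⟩ := hK.elim_nhds_subcover U (fun x _ => (hUopen x).mem_nhds (hmemU x))
  refine ⟨t.card, fun v S hS => ?_⟩
  have hex : ∀ w ∈ S, ∃ x, x ∈ t ∧ w ∈ U x := by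
    intro w hw
    obtain ⟨x, hxt, hwU⟩ := Set.mem_iUnion₂.mp (hcov (hS w hw).1)
    exact ⟨x, hxt, hwU⟩
  refine Finset.card_le_card_of_injOn
    (fun w => if h : ∃ x, x ∈ t ∧ w ∈ U x then h.choose else w) (fun w hw => ?_) ?_
  · have h := hex w hw
    simp only [dif_pos h]
    exact h.choose_spec.1
  · intro a ha b hb hab
    have hA := hex a ha
    have hB := hex b hb
    simp only [dif_pos hA, dif_pos hB] at hab
    have haU : a ∈ U hA.choose := hA.choose_spec.2
    have hbU : b ∈ U hA.choose := by rw [hab]; exact hB.choose_spec.2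
    exact hinj hA.choose haU hbU (by rw [(hS a ha).2, (hS b hb).2])

lemma mul_image_isCompact {A B : Set G} (hA : IsCompact A) (hB : IsCompact B) :
    IsCompact {z : G | ∃ a ∈ A, ∃ b ∈ B, g.s a = g.r b ∧ z = g.mul a b} := by
  have hcl : IsClosed {p : G × G | g.s p.1 = g.r p.2} :=
    isClosed_eq (g.continuous_s.comp continuous_fst) (g.continuous_r.comp continuous_snd)
  have hT : IsCompact ((A ×ˢ B) ∩ {p : G × G | g.s p.1 = g.r p.2}) :=
    (hA.prod hB).inter_right hcl
  have himg : {z : G | ∃ a ∈ A, ∃ b ∈ B, g.s a = g.r b ∧ z = g.mul a b}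
      = (fun p : G × G => g.mul p.1 p.2) ''
        ((A ×ˢ B) ∩ {p : G × G | g.s p.1 = g.r p.2}) := by
    ext z; constructor
    · rintro ⟨a, ha, b, hb, hab, rfl⟩; exact ⟨(a, b), ⟨⟨ha, hb⟩, hab⟩, rfl⟩
    · rintro ⟨⟨a, b⟩, ⟨⟨ha, hb⟩, hab⟩, rfl⟩; exact ⟨a, ha, b, hb, hab, rfl⟩
  rw [himg]
  refine hT.image_of_continuousOn ?_
  intro p hp
  rw [ContinuousWithinAt, Filter.tendsto_def]
  intro W hW
  obtain ⟨W', hW'sub, hW'open, hfp⟩ := mem_nhds_iff.mp hW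
  obtain ⟨U, V, hUopen, hVopen, hpU, hpV, hUV⟩ :=
    g.continuous_mul p.1 p.2 hp.2 W' hW'open hfp
  rw [mem_nhdsWithin]
  exact ⟨U ×ˢ V, hUopen.prod hVopen, ⟨hpU, hpV⟩, fun q hq =>
    hW'sub (hUV q.1 hq.1.1 q.2 hq.1.2 hq.2.2)⟩

/-- The matrix coefficient of the GNS representation, in explicit double-sum form. -/
def coefAux (g : EtaleGroupoid G) (F p q : G → ℂ) : G → ℂ := fun x =>
  ∑' y : g.rFiber (g.r x), ∑' z : g.rFiber (g.r x),
    q (g.mul (g.inv x) (z : G)) * conj (p (y : G)) * F (g.mul (g.inv (y : G)) (z : G))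

lemma P_finite (p : G → ℂ) (hpc : HasCompactSupport p) (x : G) :
    {y : g.rFiber (g.r x) | p (y : G) ≠ 0}.Finite := by
  have h1 : (tsupport p ∩ g.rFiber (g.r x)).Finite :=
    g.compact_inter_fiber_finite hpc (g.r x)
  refine Set.Finite.of_finite_image (f := Subtype.val) (h1.subset ?_)
    (Subtype.val_injective.injOn)
  rintro w ⟨y, hy, rfl⟩
  exact ⟨subset_tsupport p (Function.mem_support.mpr hy), y.2⟩

lemma Q_finite (q : G → ℂ) (hqc : HasCompactSupport q) (x : G) :
    {z : g.rFiber (g.r x) | q (g.mul (g.inv x) (z : G)) ≠ 0}.Finite := by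
  have h1 : (tsupport q ∩ g.rFiber (g.s x)).Finite :=
    g.compact_inter_fiber_finite hqc (g.s x)
  refine Set.Finite.of_finite_image
    (f := fun z : g.rFiber (g.r x) => g.mul (g.inv x) (z : G)) (h1.subset ?_) ?_
  · rintro w ⟨z, hz, rfl⟩
    exact ⟨subset_tsupport q (Function.mem_support.mpr hz), g.r_mul_inv_left z.2⟩
  · intro a _ b _ hab
    have h2 : g.mul (g.inv x) (a : G) = g.mul (g.inv x) (b : G) := hab
    have h3 := congrArg (g.mul x) h2
    rw [g.comp_left a.2, g.comp_left b.2] at h3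
    exact Subtype.ext h3

lemma coefAux_eq_sum (F p q : G → ℂ) (hpc : HasCompactSupport p)
    (hqc : HasCompactSupport q) (x : G) :
    g.coefAux F p q x =
      ∑ y ∈ (g.P_finite p hpc x).toFinset, ∑ z ∈ (g.Q_finite q hqc x).toFinset,
        q (g.mul (g.inv x) (z : G)) * conj (p (y : G)) *
          F (g.mul (g.inv (y : G)) (z : G)) := by
  unfold coefAux
  rw [tsum_eq_sum (s := (g.P_finite p hpc x).toFinset) ?hout]
  · refine Finset.sum_congr rfl fun y _ => ?_
    refine tsum_eq_sum fun z hz => ?_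
    have h0 : q (g.mul (g.inv x) (z : G)) = 0 := by
      by_contra h; exact hz ((g.Q_finite q hqc x).mem_toFinset.mpr h)
    simp [h0]
  case hout =>
    intro y hy
    have h0 : p (y : G) = 0 := by
      by_contra h; exact hy ((g.P_finite p hpc x).mem_toFinset.mpr h)
    simp [h0]

lemma conv_eq_sum (F p q : G → ℂ) (hpc : HasCompactSupport p)
    (hqc : HasCompactSupport q) (x : G) :
    g.conv (g.conv (fun y => conj (p y)) F) (fun z => conj (g.star' q z)) x =
      ∑ y ∈ (g.Q_finite q hqc x).toFinset, ∑ z ∈ (g.P_finite p hpc x).toFinset,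
        conj (p (z : G)) * F (g.mul (g.inv (z : G)) (y : G)) *
          q (g.mul (g.inv x) (y : G)) := by
  have hterm : ∀ y : g.rFiber (g.r x),
      g.conv (fun w => conj (p w)) F (y : G) *
        conj (g.star' q (g.mul (g.inv (y : G)) x))
      = (∑' z : g.rFiber (g.r x), conj (p (z : G)) * F (g.mul (g.inv (z : G)) (y : G)))
        * q (g.mul (g.inv x) (y : G)) := by
    intro y
    have h1 : g.conv (fun w => conj (p w)) F (y : G)
        = ∑' z : g.rFiber (g.r x), conj (p (z : G)) * F (g.mul (g.inv (z : G)) (y : G)) := by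
      unfold conv
      rw [show g.r (y : G) = g.r x from y.2]
    have h2 : conj (g.star' q (g.mul (g.inv (y : G)) x)) = q (g.mul (g.inv x) (y : G)) := by
      unfold star'
      rw [Complex.conj_conj]
      rw [g.inv_mul_rev (a := g.inv (y : G)) (b := x) (by rw [g.s_inv, y.2]), g.inv_inv]
    rw [h1, h2]
  have h0 : g.conv (g.conv (fun y => conj (p y)) F) (fun z => conj (g.star' q z)) x
      = ∑' y : g.rFiber (g.r x), g.conv (fun w => conj (p w)) F (y : G)
          * conj (g.star' q (g.mul (g.inv (y : G)) x)) := rfl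
  rw [h0, tsum_congr hterm]
  rw [tsum_eq_sum (s := (g.Q_finite q hqc x).toFinset) ?hout]
  · refine Finset.sum_congr rfl fun y _ => ?_
    rw [tsum_eq_sum (s := (g.P_finite p hpc x).toFinset) ?hin, Finset.sum_mul]
    case hin =>
      intro z hz
      have h0' : p (z : G) = 0 := by
        by_contra h; exact hz ((g.P_finite p hpc x).mem_toFinset.mpr h)
      simp [h0']
  case hout =>
    intro y hy
    have h0' : q (g.mul (g.inv x) (y : G)) = 0 := by
      by_contra h; exact hy ((g.Q_finite q hqc x).mem_toFinset.mpr h)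
    simp [h0']

lemma coefAux_eq_conv (F p q : G → ℂ) (hpc : HasCompactSupport p)
    (hqc : HasCompactSupport q) :
    g.coefAux F p q
      = g.conv (g.conv (fun y => conj (p y)) F) (fun z => conj (g.star' q z)) := by
  funext x
  rw [g.coefAux_eq_sum F p q hpc hqc x, g.conv_eq_sum F p q hpc hqc x, Finset.sum_comm]
  exact Finset.sum_congr rfl fun y _ => Finset.sum_congr rfl fun z _ => by ring

lemma cc_bound {f : G → ℂ} (hf : Continuous f) (hfc : HasCompactSupport f) :
    ∃ M : ℝ, 0 ≤ M ∧ ∀ x, ‖f x‖ ≤ M := by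
  obtain ⟨C, hC⟩ := hfc.exists_bound_of_continuous hf
  exact ⟨max C 0, le_max_right _ _, fun x => le_trans (hC x) (le_max_left _ _)⟩

lemma norm_double_sum_le {α β : Type} (P : Finset α) (Q : Finset β) (t : α → β → ℂ)
    {c : ℝ} (h : ∀ y ∈ P, ∀ z ∈ Q, ‖t y z‖ ≤ c) :
    ‖∑ y ∈ P, ∑ z ∈ Q, t y z‖ ≤ (P.card : ℝ) * ((Q.card : ℝ) * c) := by
  calc ‖∑ y ∈ P, ∑ z ∈ Q, t y z‖ ≤ ∑ y ∈ P, ‖∑ z ∈ Q, t y z‖ := norm_sum_le _ _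
    _ ≤ ∑ y ∈ P, (Q.card : ℝ) * c := by
        refine Finset.sum_le_sum fun y hy => ?_
        calc ‖∑ z ∈ Q, t y z‖ ≤ ∑ z ∈ Q, ‖t y z‖ := norm_sum_le _ _
          _ ≤ ∑ _z ∈ Q, c := Finset.sum_le_sum fun z hz => h y hy z hz
          _ = (Q.card : ℝ) * c := by rw [Finset.sum_const, nsmul_eq_mul]
    _ = (P.card : ℝ) * ((Q.card : ℝ) * c) := by rw [Finset.sum_const, nsmul_eq_mul]

lemma norm_term_le {a b c : ℂ} {Ma Mb Mc : ℝ} (ha : ‖a‖ ≤ Ma) (hb : ‖b‖ ≤ Mb)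
    (hc : ‖c‖ ≤ Mc) (h0a : 0 ≤ Ma) (h0b : 0 ≤ Mb) :
    ‖a * conj b * c‖ ≤ Ma * Mb * Mc := by
  rw [norm_mul, norm_mul, RCLike.norm_conj]
  exact mul_le_mul (mul_le_mul ha hb (norm_nonneg _) h0a) hc (norm_nonneg _)
    (mul_nonneg h0a h0b)

lemma card_P_le {K : Set G} (hK : IsCompact K) {N : ℕ}
    (hN : ∀ (v : G) (S : Finset G), (∀ w ∈ S, w ∈ K ∧ g.r w = v) → S.card ≤ N)
    (p : G → ℂ) (hpK : tsupport p ⊆ K) (hpc : HasCompactSupport p) (x : G) :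
    ((g.P_finite p hpc x).toFinset.card : ℝ) ≤ N := by
  classical
  have hmem : ∀ w ∈ (g.P_finite p hpc x).toFinset.image Subtype.val,
      w ∈ K ∧ g.r w = g.r x := by
    intro w hw
    obtain ⟨y, hy, rfl⟩ := Finset.mem_image.mp hw
    have hy' := (g.P_finite p hpc x).mem_toFinset.mp hy
    exact ⟨hpK (subset_tsupport p (Function.mem_support.mpr hy')), y.2⟩
  have h := hN (g.r x) ((g.P_finite p hpc x).toFinset.image Subtype.val) hmem
  rw [Finset.card_image_of_injective _ Subtype.val_injective] at h
  exact_mod_cast h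

lemma card_Q_le {K : Set G} (hK : IsCompact K) {N : ℕ}
    (hN : ∀ (v : G) (S : Finset G), (∀ w ∈ S, w ∈ K ∧ g.r w = v) → S.card ≤ N)
    (q : G → ℂ) (hqK : tsupport q ⊆ K) (hqc : HasCompactSupport q) (x : G) :
    ((g.Q_finite q hqc x).toFinset.card : ℝ) ≤ N := by
  classical
  have hmem : ∀ w ∈ (g.Q_finite q hqc x).toFinset.image
      (fun z : g.rFiber (g.r x) => g.mul (g.inv x) (z : G)),
      w ∈ K ∧ g.r w = g.s x := by
    intro w hw
    obtain ⟨z, hz, rfl⟩ := Finset.mem_image.mp hw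
    have hz' := (g.Q_finite q hqc x).mem_toFinset.mp hz
    exact ⟨hqK (subset_tsupport q (Function.mem_support.mpr hz')), g.r_mul_inv_left z.2⟩
  have h := hN (g.s x) ((g.Q_finite q hqc x).toFinset.image
    (fun z : g.rFiber (g.r x) => g.mul (g.inv x) (z : G))) hmem
  have hinj : Set.InjOn (fun z : g.rFiber (g.r x) => g.mul (g.inv x) (z : G))
      ((g.Q_finite q hqc x).toFinset : Set (g.rFiber (g.r x))) := by
    intro a _ b _ hab
    have h2 : g.mul (g.inv x) (a : G) = g.mul (g.inv x) (b : G) := hab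
    have h3 := congrArg (g.mul x) h2
    rw [g.comp_left a.2, g.comp_left b.2] at h3
    exact Subtype.ext h3
  rw [Finset.card_image_of_injOn hinj] at h
  exact_mod_cast h

lemma coefAux_bdd (F p q : G → ℂ) (hFbdd : BddFun F)
    (hp : Continuous p) (hpc : HasCompactSupport p)
    (hq : Continuous q) (hqc : HasCompactSupport q) :
    BddFun (g.coefAux F p q) := by
  obtain ⟨Mp, hMp0, hMp⟩ := cc_bound hp hpc
  obtain ⟨Mq, hMq0, hMq⟩ := cc_bound hq hqc
  obtain ⟨MF, hMF⟩ := hFbdd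
  obtain ⟨Np, hNp⟩ := g.fiber_card_bound hpc
  obtain ⟨Nq, hNq⟩ := g.fiber_card_bound hqc
  refine ⟨(Np : ℝ) * ((Nq : ℝ) * (Mq * Mp * max MF 0)), fun x => ?_⟩
  rw [g.coefAux_eq_sum F p q hpc hqc x]
  have hc0 : (0 : ℝ) ≤ Mq * Mp * max MF 0 := by positivity
  have h1 := norm_double_sum_le (g.P_finite p hpc x).toFinset
    (g.Q_finite q hqc x).toFinset
    (fun y z => q (g.mul (g.inv x) (z : G)) * conj (p (y : G)) *
      F (g.mul (g.inv (y : G)) (z : G)))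
    (c := Mq * Mp * max MF 0)
    (fun y _ z _ => norm_term_le (hMq _) (hMp _)
      (le_trans (hMF _) (le_max_left _ _)) hMq0 hMp0)
  refine le_trans h1 ?_
  have hcP := g.card_P_le hpc hNp p subset_rfl hpc x
  have hcQ := g.card_Q_le hqc hNq q subset_rfl hqc x
  have hQc : ((g.Q_finite q hqc x).toFinset.card : ℝ) * (Mq * Mp * max MF 0)
      ≤ (Nq : ℝ) * (Mq * Mp * max MF 0) := mul_le_mul_of_nonneg_right hcQ hc0
  refine mul_le_mul hcP hQc (by positivity) (by positivity)

lemma coefAux_vanish (F p q : G → ℂ)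
    (hFloc : ∀ K : Set G, K ⊆ g.units → IsCompact K → ∀ ε : ℝ, 0 < ε →
      ∃ C : Set G, IsCompact C ∧ ∀ x : G, g.r x ∈ K → g.s x ∈ K → x ∉ C → ‖F x‖ < ε)
    (hp : Continuous p) (hpc : HasCompactSupport p)
    (hq : Continuous q) (hqc : HasCompactSupport q) :
    ∀ K : Set G, K ⊆ g.units → IsCompact K → ∀ ε : ℝ, 0 < ε →
      ∃ C : Set G, IsCompact C ∧ ∀ x : G, g.r x ∈ K → g.s x ∈ K → x ∉ C →
        ‖g.coefAux F p q x‖ < ε := by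
  intro K _ _ ε hε
  obtain ⟨Mp, hMp0, hMp⟩ := cc_bound hp hpc
  obtain ⟨Mq, hMq0, hMq⟩ := cc_bound hq hqc
  obtain ⟨Np, hNp⟩ := g.fiber_card_bound hpc
  obtain ⟨Nq, hNq⟩ := g.fiber_card_bound hqc
  set D : ℝ := (Np : ℝ) * ((Nq : ℝ) * (Mq * Mp)) with hD
  have hD0 : 0 ≤ D := by positivity
  set ε' : ℝ := ε / (D + 1) with hε'def
  have hε' : 0 < ε' := div_pos hε (by linarith)
  set K' : Set G := g.s '' tsupport p ∪ g.s '' tsupport q with hK'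
  have hK'units : K' ⊆ g.units := by
    rintro w (⟨a, _, rfl⟩ | ⟨a, _, rfl⟩) <;> exact ⟨g.inv a, (g.r_inv' a)⟩
  have hK'comp : IsCompact K' := (hpc.image g.continuous_s).union (hqc.image g.continuous_s)
  obtain ⟨CF, hCFcomp, hCF⟩ := hFloc K' hK'units hK'comp ε' hε'
  refine ⟨{z : G | ∃ a ∈ {z : G | ∃ a ∈ tsupport p, ∃ b ∈ CF, g.s a = g.r b ∧ z = g.mul a b},
      ∃ b ∈ g.inv '' tsupport q, g.s a = g.r b ∧ z = g.mul a b},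
    g.mul_image_isCompact (g.mul_image_isCompact hpc hCFcomp)
      (hqc.image g.continuous_inv), ?_⟩
  intro x _ _ hxC
  rw [g.coefAux_eq_sum F p q hpc hqc x]
  have hFsmall : ∀ y ∈ (g.P_finite p hpc x).toFinset, ∀ z ∈ (g.Q_finite q hqc x).toFinset,
      ‖F (g.mul (g.inv (y : G)) (z : G))‖ ≤ ε' := by
    intro y hy z hz
    have hyP : p (y : G) ≠ 0 := (g.P_finite p hpc x).mem_toFinset.mp hy
    have hzQ : q (g.mul (g.inv x) (z : G)) ≠ 0 := (g.Q_finite q hqc x).mem_toFinset.mp hz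
    have hryz : g.r (z : G) = g.r (y : G) := by rw [y.2, z.2]
    have hrw : g.r (g.mul (g.inv (y : G)) (z : G)) = g.s (y : G) := g.r_mul_inv_left hryz
    have hsw : g.s (g.mul (g.inv (y : G)) (z : G)) = g.s (z : G) := g.s_mul_inv_left hryz
    have hyK : (y : G) ∈ tsupport p := subset_tsupport p (Function.mem_support.mpr hyP)
    have hzK : g.mul (g.inv x) (z : G) ∈ tsupport q :=
      subset_tsupport q (Function.mem_support.mpr hzQ)
    have hwK1 : g.r (g.mul (g.inv (y : G)) (z : G)) ∈ K' := Or.inl ⟨(y : G), hyK, hrw.symm⟩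
    have hwK2 : g.s (g.mul (g.inv (y : G)) (z : G)) ∈ K' := by
      refine Or.inr ⟨g.mul (g.inv x) (z : G), hzK, ?_⟩
      rw [g.s_mul_inv_left z.2, hsw]
    have hwCF : g.mul (g.inv (y : G)) (z : G) ∉ CF := by
      intro hwCF
      apply hxC
      refine ⟨(z : G), ⟨(y : G), hyK, g.mul (g.inv (y : G)) (z : G), hwCF, hrw.symm, ?_⟩,
        g.inv (g.mul (g.inv x) (z : G)), ⟨g.mul (g.inv x) (z : G), hzK, rfl⟩, ?_, ?_⟩
      · exact (g.comp_left hryz).symm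
      · rw [g.r_inv', g.s_mul_inv_left z.2]
      · rw [g.inv_mul_rev (a := g.inv x) (b := (z : G)) (by rw [g.s_inv, z.2]), g.inv_inv]
        exact (g.comp_left z.2.symm).symm
    exact le_of_lt (hCF _ hwK1 hwK2 hwCF)
  have hc0 : (0 : ℝ) ≤ Mq * Mp * ε' := by positivity
  have h1 := norm_double_sum_le (g.P_finite p hpc x).toFinset
    (g.Q_finite q hqc x).toFinset
    (fun y z => q (g.mul (g.inv x) (z : G)) * conj (p (y : G)) *
      F (g.mul (g.inv (y : G)) (z : G)))
    (c := Mq * Mp * ε')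
    ?_
  · have hcP := g.card_P_le hpc hNp p subset_rfl hpc x
    have hcQ := g.card_Q_le hqc hNq q subset_rfl hqc x
    have hQc : ((g.Q_finite q hqc x).toFinset.card : ℝ) * (Mq * Mp * ε')
        ≤ (Nq : ℝ) * (Mq * Mp * ε') := mul_le_mul_of_nonneg_right hcQ hc0
    have h2 : ((g.P_finite p hpc x).toFinset.card : ℝ) *
          (((g.Q_finite q hqc x).toFinset.card : ℝ) * (Mq * Mp * ε'))
        ≤ D * ε' := by
      refine le_trans (mul_le_mul hcP hQc (by positivity) (by positivity)) ?_
      rw [hD]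
      exact le_of_eq (by ring)
    have h3 : D * ε' < ε := by
      rw [hε'def, div_eq_mul_inv, ← mul_assoc,
        mul_inv_lt_iff₀ (by linarith : (0:ℝ) < D + 1)]
      nlinarith
    exact lt_of_le_of_lt (le_trans h1 h2) h3
  · intro y hy z hz
    exact norm_term_le (hMq _) (hMp _) (hFsmall y hy z hz) hMq0 hMp0

end Aux

end EtaleGroupoid

section Statements

variable {G : Type} [TopologicalSpace G] [T2Space G] [SecondCountableTopology G]
  [LocallyCompactSpace G] [MeasurableSpace G] [BorelSpace G]

/-- Let `F` be a continuous positive definite function on `𝒢` with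
`F ∈ B_{0,l}(𝒢)`, and let `π` be (a realization of) the GNS representation of `F`:
it carries a fundamental sequence `σ(f_n)` given by restrictions of a sup-norm dense
sequence `{f_n} ⊆ C_c(𝒢)` whose matrix coefficients are
`⟨π_F(x) σ(f_n)(s x), σ(f_m)(r x)⟩ = Σ_{y,z ∈ 𝒢^{r x}} f_n(x⁻¹z) conj(f_m(y)) F(y⁻¹z)`.
Then `π` is a `B_{0,l}(𝒢)`-representation; in fact each such matrix coefficient equals
`(conj f_m * F) * (conj (f_n*))` and lies in `B_{0,l}(𝒢)`. -/
theorem gns_of_B0l_posdef_is_B0l_rep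
    (g : EtaleGroupoid G) (F : G → ℂ) (hFcont : Continuous F) (hFpd : g.IsPosDef F)
    (hF : F ∈ g.B0l)
    (E : Type) [NormedAddCommGroup E] [InnerProductSpace ℂ E] [MeasurableSpace E]
    (π : GRep g E)
    (fs : ℕ → G → ℂ) (hfs : ∀ n, g.IsCc (fs n))
    (hdense : ∀ h : G → ℂ, g.IsCc h → ∀ ε : ℝ, 0 < ε → ∃ n, ∀ x : G, ‖h x - fs n x‖ < ε)
    (σ : ℕ → G → E) (hσ : π.IsFundSeq σ)
    (hcoeff : ∀ n m : ℕ, π.coeff (σ n) (σ m) = fun x : G =>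
      ∑' y : g.rFiber (g.r x), ∑' z : g.rFiber (g.r x),
        fs n (g.mul (g.inv x) (z : G)) * conj (fs m (y : G)) *
          F (g.mul (g.inv (y : G)) (z : G))) :
    π.IsDRep g.B0l ∧
    ∀ n m : ℕ,
      π.coeff (σ n) (σ m) =
        g.conv (g.conv (fun y => conj (fs m y)) F) (fun z => conj (g.star' (fs n) z)) ∧
      π.coeff (σ n) (σ m) ∈ g.B0l := by
  have key : ∀ n m : ℕ,
      (π.coeff (σ n) (σ m) =
        g.conv (g.conv (fun y => conj (fs m y)) F) (fun z => conj (g.star' (fs n) z)) ∧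
      π.coeff (σ n) (σ m) ∈ g.B0l) := by
    intro n m
    have hcf : π.coeff (σ n) (σ m) = g.coefAux F (fs m) (fs n) := hcoeff n m
    constructor
    · rw [hcf]
      exact g.coefAux_eq_conv F (fs m) (fs n) (hfs m).2 (hfs n).2
    · refine ⟨hσ.coeff_meas n m, ?_, ?_⟩
      · rw [hcf]
        exact g.coefAux_bdd F (fs m) (fs n) hF.2.1 (hfs m).1 (hfs m).2 (hfs n).1 (hfs n).2
      · intro K hK1 hK2 ε hε
        obtain ⟨C, hC, hC2⟩ := g.coefAux_vanish F (fs m) (fs n) hF.2.2 (hfs m).1 (hfs m).2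
          (hfs n).1 (hfs n).2 K hK1 hK2 ε hε
        refine ⟨C, hC, fun x h1 h2 h3 => ?_⟩
        rw [hcf]
        exact hC2 x h1 h2 h3
  exact ⟨⟨σ, hσ, fun n m => (key n m).2⟩, key⟩


end Statements
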